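/- Fix ε ∈ {+1, −1}. Let A be an n×n matrix over ℚ such that A − ε·Aᵀ is nonsingular, and let r be a positive integer. Let i_rA be the rn×rn matrix consisting of r×r blocks of size n×n whose (i,j)-block equals A for i ≤ j and equals ε·Aᵀ for i > j. Then the polynomials det(t·(i_rA) − ε·(i_rA)ᵀ) and det(t^r·A − ε·Aᵀ) in ℚ[t] agree up to multiplication by a unit of ℚ[t^{±1}]; that is, there exist a nonzero rational number u and natural numbers k, l such that t^k · det(t·(i_rA) − ε·(i_rA)ᵀ) = u · t^l · det(t^r·A − ε·Aᵀ) in ℚ[t]. -/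

import Mathlib

open Polynomial Matrix

/-- For an `n × n` matrix `A` over `ℚ` and `r ≥ 1`, `iMat ε r A` is the `rn × rn`
matrix consisting of `r × r` blocks of size `n × n` whose `(i,j)`-block equals `A`
for `i ≤ j` and `ε·Aᵀ` for `i > j`. -/
def iMat (ε : ℚ) {ι : Type*} (r : ℕ) (A : Matrix ι ι ℚ) :
    Matrix (Fin r × ι) (Fin r × ι) ℚ :=
  Matrix.of fun p q => if p.1 ≤ q.1 then A p.2 q.2 else ε * A q.2 p.2

namespace AlexRep

open Finset Kronecker


/-- scalar entry functions -/
def aF (t : ℚ) (i l : ℕ) : ℚ := if i < l then t - 1 else if i = l then t else 0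
def bF (t ε : ℚ) (i l : ℕ) : ℚ := if l < i then (t - 1) * ε else if i = l then -ε else 0

lemma sum_ite_le {M : Type*} [AddCommMonoid M] (r j : ℕ) (hj : j < r) (g : ℕ → M) :
    ∑ l ∈ Finset.range r, (if l ≤ j then g l else 0) = ∑ l ∈ Finset.range (j + 1), g l := by
  rw [← Finset.sum_subset (Finset.range_subset_range.2 hj)
      (fun l _ hnl => if_neg fun h => hnl (Finset.mem_range.mpr (Nat.lt_succ_of_le h)))]
  exact Finset.sum_congr rfl fun l hl => if_pos (Nat.lt_succ_iff.mp (Finset.mem_range.mp hl))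

lemma Sa (t : ℚ) (i j : ℕ) (hj : i ≤ j) :
    ∑ l ∈ Finset.range (j + 1), aF t i l * t ^ l = t ^ (j + 1) := by
  induction j, hj using Nat.le_induction with
  | base =>
      rw [Finset.sum_range_succ, Finset.sum_eq_zero, zero_add]
      · rw [aF, if_neg (by omega), if_pos rfl]; ring
      · intro l hl
        have := Finset.mem_range.mp hl
        rw [aF, if_neg (by omega), if_neg (by omega), zero_mul]
  | succ j hij ih =>
      rw [Finset.sum_range_succ, ih, aF, if_pos (by omega)]; ring

lemma Sb0 (t ε : ℚ) (i m : ℕ) (h : m ≤ i) :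
    ∑ l ∈ Finset.range m, bF t ε i l * t ^ l = ε * (t ^ m - 1) := by
  have h1 : ∀ l ∈ Finset.range m, bF t ε i l * t ^ l = ε * ((t - 1) * t ^ l) := by
    intro l hl
    have := Finset.mem_range.mp hl
    rw [bF, if_pos (by omega)]; ring
  rw [Finset.sum_congr rfl h1, ← Finset.mul_sum, ← Finset.mul_sum, mul_comm (t - 1),
    geom_sum_mul]

/-- the matrices -/
def LrM (r : ℕ) : Matrix (Fin r) (Fin r) ℚ :=
  Matrix.of fun i k => (if (k : ℕ) = (i : ℕ) then 1 else 0)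
    + (if (k : ℕ) = (i : ℕ) + 1 then -1 else 0)

def UrM (t : ℚ) (r : ℕ) : Matrix (Fin r) (Fin r) ℚ :=
  Matrix.of fun l j => if (l : ℕ) ≤ (j : ℕ) then t ^ (l : ℕ) else 0

def aM (t : ℚ) (r : ℕ) : Matrix (Fin r) (Fin r) ℚ := Matrix.of fun k l => aF t k l
def bM (t ε : ℚ) (r : ℕ) : Matrix (Fin r) (Fin r) ℚ := Matrix.of fun k l => bF t ε k l

lemma aUr_apply (t : ℚ) {r : ℕ} (i j : Fin r) :
    (aM t r * UrM t r) i j = if (i : ℕ) ≤ (j : ℕ) then t ^ ((j : ℕ) + 1) else 0 := by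
  rw [Matrix.mul_apply]
  have h1 : ∀ l : Fin r, aM t r i l * UrM t r l j
      = if (l : ℕ) ≤ (j : ℕ) then aF t i l * t ^ (l : ℕ) else 0 := by
    intro l
    by_cases h : (l : ℕ) ≤ (j : ℕ)
    · rw [if_pos h]; simp only [aM, UrM, Matrix.of_apply, if_pos h]
    · rw [if_neg h]; simp only [UrM, Matrix.of_apply, if_neg h, mul_zero]
  rw [Finset.sum_congr rfl fun l _ => h1 l,
    Fin.sum_univ_eq_sum_range (fun L => if L ≤ (j : ℕ) then aF t i L * t ^ L else 0) r,
    sum_ite_le r j j.isLt]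
  by_cases h : (i : ℕ) ≤ (j : ℕ)
  · rw [if_pos h, Sa t i j h]
  · rw [if_neg h]
    apply Finset.sum_eq_zero
    intro l hl
    have := Finset.mem_range.mp hl
    rw [aF, if_neg (by omega), if_neg (by omega), zero_mul]

lemma bUr_apply (t ε : ℚ) {r : ℕ} (i j : Fin r) :
    (bM t ε r * UrM t r) i j
      = if (i : ℕ) ≤ (j : ℕ) then -ε else ε * (t ^ ((j : ℕ) + 1) - 1) := by
  rw [Matrix.mul_apply]
  have h1 : ∀ l : Fin r, bM t ε r i l * UrM t r l j
      = if (l : ℕ) ≤ (j : ℕ) then bF t ε i l * t ^ (l : ℕ) else 0 := by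
    intro l
    by_cases h : (l : ℕ) ≤ (j : ℕ)
    · rw [if_pos h]; simp only [bM, UrM, Matrix.of_apply, if_pos h]
    · rw [if_neg h]; simp only [UrM, Matrix.of_apply, if_neg h, mul_zero]
  rw [Finset.sum_congr rfl fun l _ => h1 l,
    Fin.sum_univ_eq_sum_range (fun L => if L ≤ (j : ℕ) then bF t ε i L * t ^ L else 0) r,
    sum_ite_le r j j.isLt]
  by_cases h : (i : ℕ) ≤ (j : ℕ)
  · rw [if_pos h]
    rw [← Finset.sum_subset (Finset.range_subset_range.2 (by omega : (i : ℕ) + 1 ≤ (j : ℕ) + 1))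
        (fun l hl hnl => by
          rw [bF, if_neg (by simp at hnl; omega), if_neg (by simp at hnl; omega), zero_mul]),
      Finset.sum_range_succ, Sb0 t ε i i le_rfl, bF, if_neg (by omega), if_pos rfl]
    ring
  · rw [if_neg h, Sb0 t ε i (j + 1) (by omega)]

lemma Lr_mul_apply {r : ℕ} (X : Matrix (Fin r) (Fin r) ℚ) (i j : Fin r) :
    (LrM r * X) i j
      = X i j - (if h : (i : ℕ) + 1 < r then X ⟨(i : ℕ) + 1, h⟩ j else 0) := by
  rw [Matrix.mul_apply]
  have h1 : ∀ k : Fin r, LrM r i k * X k j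
      = (if k = i then X k j else 0) + (if (k : ℕ) = (i : ℕ) + 1 then -X k j else 0) := by
    intro k
    by_cases h1 : (k : ℕ) = (i : ℕ) <;> by_cases h2 : (k : ℕ) = (i : ℕ) + 1 <;>
      simp [LrM, h1, h2, Fin.ext_iff] <;> omega
  rw [Finset.sum_congr rfl fun k _ => h1 k, Finset.sum_add_distrib,
    Finset.sum_ite_eq' Finset.univ i (fun k => X k j), if_pos (Finset.mem_univ i)]
  by_cases h : (i : ℕ) + 1 < r
  · have h2 : ∀ k : Fin r, ((k : ℕ) = (i : ℕ) + 1) ↔ (k = ⟨(i : ℕ) + 1, h⟩) := by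
      intro k; rw [Fin.ext_iff]
    simp_rw [h2]
    rw [Finset.sum_ite_eq' Finset.univ (⟨(i : ℕ) + 1, h⟩ : Fin r) (fun k => -X k j),
      if_pos (Finset.mem_univ _), dif_pos h]
    ring
  · have h2 : ∀ k : Fin r, ¬ ((k : ℕ) = (i : ℕ) + 1) := fun k => by
      have := k.isLt; omega
    rw [Finset.sum_eq_zero fun k _ => if_neg (h2 k), dif_neg h]
    ring


section PQ

variable (t ε : ℚ) {r : ℕ}

lemma P_diag (i : Fin r) : (LrM r * (aM t r * UrM t r)) i i = t ^ ((i : ℕ) + 1) := by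
  rw [Lr_mul_apply, aUr_apply, if_pos le_rfl]
  by_cases h : (i : ℕ) + 1 < r
  · rw [dif_pos h, aUr_apply, if_neg (by simp), sub_zero]
  · rw [dif_neg h, sub_zero]

lemma P_off {i j : Fin r} (hij : (i : ℕ) ≠ (j : ℕ)) :
    (LrM r * (aM t r * UrM t r)) i j = 0 := by
  rw [Lr_mul_apply, aUr_apply]
  by_cases h : (i : ℕ) + 1 < r
  · rw [dif_pos h, aUr_apply]
    rcases lt_or_gt_of_ne hij with h2 | h2
    · rw [if_pos (by omega), if_pos (by simpa using h2), sub_self]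
    · rw [if_neg (by omega), if_neg (by simp; omega), sub_zero]
  · rw [dif_neg h, if_neg (by omega), sub_zero]

lemma Q_off {i j : Fin r} (hij : (i : ℕ) < (j : ℕ)) :
    (LrM r * (bM t ε r * UrM t r)) i j = 0 := by
  have h : (i : ℕ) + 1 < r := by have := j.isLt; omega
  rw [Lr_mul_apply, bUr_apply, dif_pos h, bUr_apply, if_pos (by omega),
    if_pos (by simp; omega), sub_self]

lemma Q_diag1 {i : Fin r} (h : (i : ℕ) + 1 < r) :
    (LrM r * (bM t ε r * UrM t r)) i i = -ε * t ^ ((i : ℕ) + 1) := by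
  rw [Lr_mul_apply, bUr_apply, if_pos le_rfl, dif_pos h, bUr_apply, if_neg (by simp)]
  ring

lemma Q_diag2 {i : Fin r} (h : ¬ ((i : ℕ) + 1 < r)) :
    (LrM r * (bM t ε r * UrM t r)) i i = -ε := by
  rw [Lr_mul_apply, bUr_apply, if_pos le_rfl, dif_neg h, sub_zero]

end PQ


section Dets

lemma det_LrM (r : ℕ) : (LrM r).det = 1 := by
  rw [Matrix.det_of_upperTriangular (M := LrM r)
      (fun i j hij => by
        have h : (j : ℕ) < (i : ℕ) := hij
        rw [LrM, Matrix.of_apply, if_neg (by omega), if_neg (by omega), add_zero])]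
  apply Finset.prod_eq_one
  intro i _
  rw [LrM, Matrix.of_apply, if_pos rfl, if_neg (by omega), add_zero]

lemma det_UrM (t : ℚ) (r : ℕ) : (UrM t r).det = ∏ l : Fin r, t ^ (l : ℕ) := by
  rw [Matrix.det_of_upperTriangular (M := UrM t r)
      (fun i j hij => by
        have h : (j : ℕ) < (i : ℕ) := hij
        rw [UrM, Matrix.of_apply, if_neg (by omega)])]
  exact Finset.prod_congr rfl fun i _ => by rw [UrM, Matrix.of_apply, if_pos le_rfl]

end Dets


section Key

lemma key (ε t : ℚ) (hε2 : ε * ε = 1) (ht : t ≠ 0) {n m : ℕ} (A : Matrix (Fin n) (Fin n) ℚ) :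
    (t • iMat ε (m + 1) A - ε • (iMat ε (m + 1) A)ᵀ).det
      = ((A - ε • Aᵀ).det) ^ m * ((t ^ (m + 1)) • A - ε • Aᵀ).det := by
  set r := m + 1 with hr
  set M₀ := iMat ε r A with hM₀
  set P := LrM r * (aM t r * UrM t r) with hP
  set Q := LrM r * (bM t ε r * UrM t r) with hQ
  set G := A ⊗ₖ P + Aᵀ ⊗ₖ Q with hGdef
  -- step 1: reindexed matrix equals Kronecker combination
  have hre : ((t • M₀ - ε • M₀ᵀ).submatrix (Equiv.prodComm (Fin n) (Fin r))
        (Equiv.prodComm (Fin n) (Fin r)))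
      = A ⊗ₖ aM t r + Aᵀ ⊗ₖ bM t ε r := by
    ext ⟨a, i⟩ ⟨b, j⟩
    simp only [Matrix.submatrix_apply, Equiv.prodComm_apply, Prod.swap_prod_mk,
      Matrix.sub_apply, Matrix.smul_apply, Matrix.transpose_apply, smul_eq_mul,
      Matrix.add_apply, Matrix.kroneckerMap_apply, hM₀, iMat, Matrix.of_apply,
      aM, bM, aF, bF]
    simp only [Fin.le_def]
    split_ifs
    any_goals (exfalso; omega)
    any_goals ring
    all_goals linear_combination (-(A a b)) * hε2
  -- step 2: triple product
  have hG : ((1 : Matrix (Fin n) (Fin n) ℚ) ⊗ₖ LrM r)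
        * ((A ⊗ₖ aM t r + Aᵀ ⊗ₖ bM t ε r) * ((1 : Matrix (Fin n) (Fin n) ℚ) ⊗ₖ UrM t r))
      = G := by
    rw [add_mul, mul_add, ← Matrix.mul_kronecker_mul, ← Matrix.mul_kronecker_mul,
      ← Matrix.mul_kronecker_mul, ← Matrix.mul_kronecker_mul, Matrix.mul_one, Matrix.mul_one,
      Matrix.one_mul, Matrix.one_mul, hGdef, hP, hQ]
  -- step 3: determinant of G, computed via step 2
  have hdetG1 : G.det = (t • M₀ - ε • M₀ᵀ).det * (∏ l : Fin r, t ^ (l : ℕ)) ^ n := by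
    rw [← hG, Matrix.det_mul, Matrix.det_mul, ← hre, Matrix.det_submatrix_equiv_self,
      Matrix.det_kronecker, Matrix.det_kronecker, det_LrM, det_UrM]
    simp only [Matrix.det_one, one_pow, one_mul, Fintype.card_fin]
  -- step 4: G is block (lower) triangular
  have hGtri : G.BlockTriangular (fun p : Fin n × Fin r => OrderDual.toDual p.2) := by
    rintro ⟨a, i⟩ ⟨b, j⟩ hij
    have hji : (i : ℕ) < (j : ℕ) := hij
    show A a b * P i j + Aᵀ a b * Q i j = 0
    rw [hP, hQ, P_off t (i := i) (j := j) (by omega), Q_off t ε hji]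
    ring
  have hdetG2 : G.det = ∏ k : (Fin r)ᵒᵈ,
      (G.toSquareBlock (fun p : Fin n × Fin r => OrderDual.toDual p.2) k).det :=
    hGtri.det_fintype
  -- step 5: the square blocks
  have hblock : ∀ k : Fin r,
      (G.toSquareBlock (fun p : Fin n × Fin r => OrderDual.toDual p.2)
        (OrderDual.toDual k)).det
      = ((P k k) • A + (Q k k) • Aᵀ).det := by
    intro k
    let e : Fin n ≃ {p : Fin n × Fin r //
        (fun p : Fin n × Fin r => OrderDual.toDual p.2) p = OrderDual.toDual k} :=
      { toFun := fun a => ⟨(a, k), rfl⟩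
        invFun := fun p => p.1.1
        left_inv := fun a => rfl
        right_inv := fun p => by
          obtain ⟨⟨a, i⟩, hp⟩ := p
          have hik : i = k := hp
          subst hik
          rfl }
    rw [← Matrix.det_submatrix_equiv_self e]
    congr 1
    ext a b
    show A a b * P k k + Aᵀ a b * Q k k = _
    simp only [Matrix.add_apply, Matrix.smul_apply, Matrix.transpose_apply, smul_eq_mul]
    ring
  -- step 6: assemble
  have hprod : (∏ k : (Fin r)ᵒᵈ,
        (G.toSquareBlock (fun p : Fin n × Fin r => OrderDual.toDual p.2) k).det)
      = ∏ k : Fin r, ((P k k) • A + (Q k k) • Aᵀ).det :=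
    (Fintype.prod_equiv (OrderDual.toDual (α := Fin r)) _ _ fun k => (hblock k).symm).symm
  have hval : (∏ k : Fin r, ((P k k) • A + (Q k k) • Aᵀ).det)
      = ((∏ i : Fin m, t ^ ((i : ℕ) + 1)) ^ n) * ((A - ε • Aᵀ).det) ^ m
        * ((t ^ r) • A - ε • Aᵀ).det := by
    rw [Fin.prod_univ_castSucc]
    have hlast : (P (Fin.last m)) (Fin.last m) • A + (Q (Fin.last m)) (Fin.last m) • Aᵀ
        = (t ^ r) • A - ε • Aᵀ := by
      rw [hP, hQ, P_diag, Q_diag2 t ε (by simp; omega)]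
      simp only [Fin.val_last]
      module
    have hcast : ∀ i : Fin m,
        ((P i.castSucc) i.castSucc • A + (Q i.castSucc) i.castSucc • Aᵀ).det
        = (t ^ ((i : ℕ) + 1)) ^ n * (A - ε • Aᵀ).det := by
      intro i
      have h1 : ((i.castSucc : Fin r) : ℕ) + 1 < r := by
        simp [Fin.castSucc]; omega
      rw [hP, hQ, P_diag, Q_diag1 t ε h1, Fin.coe_castSucc,
        show (t ^ ((i : ℕ) + 1)) • A + (-ε * t ^ ((i : ℕ) + 1)) • Aᵀ
          = (t ^ ((i : ℕ) + 1)) • (A - ε • Aᵀ) from by module,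
        Matrix.det_smul, Fintype.card_fin]
    rw [hlast, Finset.prod_congr rfl fun i _ => hcast i, Finset.prod_mul_distrib,
      Finset.prod_const, Finset.prod_pow, Finset.card_univ, Fintype.card_fin]
  have hshift : (∏ l : Fin r, t ^ (l : ℕ)) = ∏ i : Fin m, t ^ ((i : ℕ) + 1) := by
    rw [Fin.prod_univ_succ]
    simp [Fin.val_succ]
  have hfinal : (t • M₀ - ε • M₀ᵀ).det * (∏ l : Fin r, t ^ (l : ℕ)) ^ n
      = (((A - ε • Aᵀ).det) ^ m * ((t ^ r) • A - ε • Aᵀ).det)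
        * (∏ l : Fin r, t ^ (l : ℕ)) ^ n := by
    rw [← hdetG1, hdetG2, hprod, hval, hshift]
    ring
  exact mul_right_cancel₀
    (pow_ne_zero n (Finset.prod_ne_zero_iff.2 fun l _ => pow_ne_zero _ ht)) hfinal

end Key


lemma eval_det_lin {ι : Type*} [Fintype ι] [DecidableEq ι] (t ε : ℚ) (p : ℚ[X])
    (M N : Matrix ι ι ℚ) :
    Polynomial.eval t ((p • M.map Polynomial.C
        - Polynomial.C ε • N.map Polynomial.C).det)
      = ((Polynomial.eval t p) • M - ε • N).det := by
  rw [← Polynomial.coe_evalRingHom, RingHom.map_det]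
  congr 1
  ext i j
  simp [Matrix.map_apply, Matrix.sub_apply, Matrix.smul_apply, smul_eq_mul]

end AlexRep

open AlexRep in
/-- (Reparametrization formula for Alexander polynomials.)
Fix `ε = ±1`.  If `A` is an `n × n` matrix over `ℚ` with `A - ε·Aᵀ` nonsingular and
`r ≥ 1`, then `det(t·(i_rA) - ε·(i_rA)ᵀ)` and `det(t^r·A - ε·Aᵀ)` agree up to
multiplication by a unit of `ℚ[t^{±1}]`. -/
theorem alexander_polynomial_reparametrization
    (ε : ℚ) (hε : ε = 1 ∨ ε = -1) (n : ℕ) (A : Matrix (Fin n) (Fin n) ℚ)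
    (hA : (A - ε • Aᵀ).det ≠ 0) (r : ℕ) (hr : 0 < r) :
    ∃ (u : ℚ) (k l : ℕ), u ≠ 0 ∧
      (X : ℚ[X]) ^ k *
          ((X : ℚ[X]) • (iMat ε r A).map C - C ε • (iMat ε r A)ᵀ.map C).det
        = C u * (X : ℚ[X]) ^ l *
          (((X : ℚ[X]) ^ r) • A.map C - C ε • Aᵀ.map C).det := by
  obtain ⟨m, rfl⟩ : ∃ m, r = m + 1 := ⟨r - 1, by omega⟩
  have hε2 : ε * ε = 1 := by rcases hε with h | h <;> rw [h] <;> norm_num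
  refine ⟨((A - ε • Aᵀ).det) ^ m, 0, 0, pow_ne_zero m hA, ?_⟩
  rw [pow_zero, one_mul, mul_one]
  apply Polynomial.eq_of_infinite_eval_eq
  apply Set.Infinite.mono (s := ({0} : Set ℚ)ᶜ)
  · intro x hx
    have hx0 : x ≠ 0 := Set.mem_compl_singleton_iff.mp hx
    simp only [Set.mem_setOf_eq]
    rw [eval_det_lin, Polynomial.eval_mul, Polynomial.eval_C, eval_det_lin,
      Polynomial.eval_X, Polynomial.eval_pow, Polynomial.eval_X,
      key ε x hε2 hx0 A]
  · exact Set.Finite.infinite_compl (Set.finite_singleton 0)
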